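/- Positive invariance of the nonnegative orthant for the HIV model: if (x₁, x₂, x₃) : [0,T] → ℝ³ is a C¹ solution of ẋ₁ = s − d x₁ − β x₁ x₃, ẋ₂ = β x₁ x₃ − μ₁ x₂, ẋ₃ = k x₂ − μ₂ x₃ with s, d, β, μ₁, k, μ₂ > 0 and x₁(0), x₂(0), x₃(0) ≥ 0, then x₁(t), x₂(t), x₃(t) ≥ 0 for all t ∈ [0,T]. -/

import Mathlib

open Set Real Filter Topology

private lemma prod_lb {x y a M : ℝ} (ha : 0 < a) (hM : 0 ≤ M) (hx : -a ≤ x) (hy : -a ≤ y)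
    (hxM : x ≤ M) (hyM : y ≤ M) : -(M * a) ≤ x * y := by
  rcases le_or_gt 0 y with h | h
  · nlinarith [mul_nonneg (by linarith : (0:ℝ) ≤ x + a) h]
  · nlinarith [mul_nonneg (by linarith : (0:ℝ) ≤ M - x) (by linarith : (0:ℝ) ≤ -y)]

private lemma left_deriv_nonpos {f : ℝ → ℝ} {t₀ D : ℝ} (hf : HasDerivAt f D t₀)
    (h0 : f t₀ = 0) (ht₀ : 0 < t₀) (hpos : ∀ u ∈ Ico (0:ℝ) t₀, 0 ≤ f u) : D ≤ 0 := by
  have hd : HasDerivWithinAt f D (Iio t₀) t₀ := hf.hasDerivWithinAt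
  rw [hasDerivWithinAt_iff_tendsto_slope] at hd
  have hIio : Iio t₀ \ {t₀} = Iio t₀ := Set.diff_singleton_eq_self (by simp)
  rw [hIio] at hd
  refine le_of_tendsto hd ?_
  have h1 : ∀ᶠ u in 𝓝[<] t₀, 0 < u :=
    eventually_nhdsWithin_of_eventually_nhds (eventually_gt_nhds ht₀)
  filter_upwards [h1, eventually_mem_nhdsWithin] with u hu hu'
  have hu2 : u < t₀ := hu'
  have hfu : 0 ≤ f u := hpos u ⟨hu.le, hu2⟩
  have hs : slope f t₀ u = f u / (u - t₀) := by
    rw [slope_def_field, h0, sub_zero]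
  rw [hs]
  exact div_nonpos_of_nonneg_of_nonpos hfu (by linarith)

private lemma nonneg_at {f : ℝ → ℝ} {t₀ : ℝ} (hf : ContinuousAt f t₀) (ht₀ : 0 < t₀)
    (hpos : ∀ u ∈ Ico (0:ℝ) t₀, 0 < f u) : 0 ≤ f t₀ := by
  have h : Tendsto f (𝓝[<] t₀) (𝓝 (f t₀)) := hf.tendsto.mono_left nhdsWithin_le_nhds
  refine ge_of_tendsto h ?_
  have h1 : ∀ᶠ u in 𝓝[<] t₀, 0 < u :=
    eventually_nhdsWithin_of_eventually_nhds (eventually_gt_nhds ht₀)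
  filter_upwards [h1, eventually_mem_nhdsWithin] with u hu hu'
  exact (hpos u ⟨hu.le, hu'⟩).le

/-- Positive invariance of the nonnegative orthant for the HIV model: a C¹
solution on `[0,T]` with nonnegative initial data stays nonnegative. -/
theorem stmt_8 (s d β μ₁ k μ₂ T : ℝ)
    (hs : 0 < s) (hd : 0 < d) (hβ : 0 < β) (hμ₁ : 0 < μ₁) (hk : 0 < k)
    (hμ₂ : 0 < μ₂)
    (x₁ x₂ x₃ : ℝ → ℝ)
    (hx₁ : ∀ t ∈ Icc (0:ℝ) T,
      HasDerivAt x₁ (s - d * x₁ t - β * x₁ t * x₃ t) t)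
    (hx₂ : ∀ t ∈ Icc (0:ℝ) T,
      HasDerivAt x₂ (β * x₁ t * x₃ t - μ₁ * x₂ t) t)
    (hx₃ : ∀ t ∈ Icc (0:ℝ) T,
      HasDerivAt x₃ (k * x₂ t - μ₂ * x₃ t) t)
    (h₁ : 0 ≤ x₁ 0) (h₂ : 0 ≤ x₂ 0) (h₃ : 0 ≤ x₃ 0) :
    ∀ t ∈ Icc (0:ℝ) T, 0 ≤ x₁ t ∧ 0 ≤ x₂ t ∧ 0 ≤ x₃ t := by
  intro t ht
  have hT : (0:ℝ) ≤ T := le_trans ht.1 ht.2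
  have hc₁ : ContinuousOn x₁ (Icc 0 T) := fun u hu => (hx₁ u hu).continuousAt.continuousWithinAt
  have hc₃ : ContinuousOn x₃ (Icc 0 T) := fun u hu => (hx₃ u hu).continuousAt.continuousWithinAt
  obtain ⟨M, hM⟩ : ∃ M, ∀ u ∈ Icc (0:ℝ) T, |x₁ u| ≤ M ∧ |x₃ u| ≤ M := by
    obtain ⟨C, hC⟩ := isCompact_Icc.exists_bound_of_continuousOn
      (f := fun u => ((x₁ u, x₃ u) : ℝ × ℝ)) (hc₁.prodMk hc₃)
    refine ⟨C, fun u hu => ?_⟩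
    have := hC u hu
    constructor
    · exact le_trans (norm_fst_le ((x₁ u, x₃ u) : ℝ × ℝ)) this
    · exact le_trans (norm_snd_le ((x₁ u, x₃ u) : ℝ × ℝ)) this
  have hM0 : 0 ≤ M := le_trans (abs_nonneg _) (hM t ht).1
  set L : ℝ := β * M + k + 1 with hLdef
  have hL : 0 < L := by positivity
  -- derivative of the exponential correction
  have hexp : ∀ ε : ℝ, ∀ u : ℝ,
      HasDerivAt (fun v => ε * Real.exp (L * v)) (ε * (L * Real.exp (L * u))) u := by
    intro ε u
    have h1 : HasDerivAt (fun v : ℝ => L * v) L u := by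
      simpa using (hasDerivAt_id u).const_mul L
    have h2 := (Real.hasDerivAt_exp (L * u)).comp u h1
    have h3 := h2.const_mul ε
    exact h3.congr_deriv (by ring)
  have key : ∀ ε : ℝ, 0 < ε → ∀ u ∈ Icc (0:ℝ) T,
      0 < x₁ u + ε * Real.exp (L * u) ∧ 0 < x₂ u + ε * Real.exp (L * u) ∧
        0 < x₃ u + ε * Real.exp (L * u) := by
    intro ε hε
    by_contra hcon
    push_neg at hcon
    obtain ⟨u₀, hu₀, hbad⟩ := hcon
    set g : ℝ → ℝ := fun u => ε * Real.exp (L * u) with hg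
    have hgpos : ∀ u, 0 < g u := fun u => mul_pos hε (Real.exp_pos _)
    have hgcont : Continuous g := by fun_prop
    set S : Set ℝ := {u | u ∈ Icc (0:ℝ) T ∧
      (x₁ u + g u ≤ 0 ∨ x₂ u + g u ≤ 0 ∨ x₃ u + g u ≤ 0)} with hSdef
    have hu₀S : u₀ ∈ S := by
      refine ⟨hu₀, ?_⟩
      rcases le_or_gt (x₁ u₀ + g u₀) 0 with h | h
      · exact Or.inl h
      rcases le_or_gt (x₂ u₀ + g u₀) 0 with h2 | h2
      · exact Or.inr (Or.inl h2)
      · exact Or.inr (Or.inr (hbad h h2))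
    have hf₁ : ContinuousOn (fun u => x₁ u + g u) (Icc 0 T) := hc₁.add hgcont.continuousOn
    have hc₂ : ContinuousOn x₂ (Icc 0 T) :=
      fun u hu => (hx₂ u hu).continuousAt.continuousWithinAt
    have hf₂ : ContinuousOn (fun u => x₂ u + g u) (Icc 0 T) := hc₂.add hgcont.continuousOn
    have hf₃ : ContinuousOn (fun u => x₃ u + g u) (Icc 0 T) := hc₃.add hgcont.continuousOn
    have hS_closed : IsClosed S := by
      have e : S = (Icc (0:ℝ) T ∩ (fun u => x₁ u + g u) ⁻¹' Iic 0) ∪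
          ((Icc (0:ℝ) T ∩ (fun u => x₂ u + g u) ⁻¹' Iic 0) ∪
            (Icc (0:ℝ) T ∩ (fun u => x₃ u + g u) ⁻¹' Iic 0)) := by
        ext u
        simp only [hSdef, mem_setOf_eq, mem_union, mem_inter_iff, mem_preimage, mem_Iic]
        tauto
      rw [e]
      exact ((hf₁.preimage_isClosed_of_isClosed isClosed_Icc isClosed_Iic).union
        ((hf₂.preimage_isClosed_of_isClosed isClosed_Icc isClosed_Iic).union
          (hf₃.preimage_isClosed_of_isClosed isClosed_Icc isClosed_Iic)))
    have hbdd : BddBelow S := ⟨0, fun u hu => hu.1.1⟩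
    set t₀ : ℝ := sInf S with ht₀def
    have ht₀S : t₀ ∈ S := hS_closed.csInf_mem ⟨u₀, hu₀S⟩ hbdd
    have ht₀Icc : t₀ ∈ Icc (0:ℝ) T := ht₀S.1
    have ht₀pos : 0 < t₀ := by
      rcases eq_or_lt_of_le ht₀Icc.1 with h | h
      · exfalso
        have hg0 : g 0 = ε := by simp [hg]
        rcases ht₀S.2 with h' | h' | h' <;> rw [← h] at h' <;> rw [hg0] at h' <;> linarith
      · exact h
    have hbefore : ∀ u ∈ Ico (0:ℝ) t₀,
        0 < x₁ u + g u ∧ 0 < x₂ u + g u ∧ 0 < x₃ u + g u := by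
      intro u hu
      by_contra hcu
      have huIcc : u ∈ Icc (0:ℝ) T := ⟨hu.1, le_trans hu.2.le ht₀Icc.2⟩
      have huS : u ∈ S := by
        refine ⟨huIcc, ?_⟩
        rcases le_or_gt (x₁ u + g u) 0 with h | h
        · exact Or.inl h
        rcases le_or_gt (x₂ u + g u) 0 with h2 | h2
        · exact Or.inr (Or.inl h2)
        rcases le_or_gt (x₃ u + g u) 0 with h3 | h3
        · exact Or.inr (Or.inr h3)
        · exact absurd ⟨h, h2, h3⟩ hcu
      exact absurd (csInf_le hbdd huS) (not_le.mpr hu.2)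
    -- all three perturbed components are ≥ 0 at t₀
    have hge₁ : 0 ≤ x₁ t₀ + g t₀ :=
      nonneg_at (f := fun u => x₁ u + g u) ((hx₁ t₀ ht₀Icc).continuousAt.add hgcont.continuousAt) ht₀pos
        (fun u hu => (hbefore u hu).1)
    have hge₂ : 0 ≤ x₂ t₀ + g t₀ :=
      nonneg_at (f := fun u => x₂ u + g u) ((hx₂ t₀ ht₀Icc).continuousAt.add hgcont.continuousAt) ht₀pos
        (fun u hu => (hbefore u hu).2.1)
    have hge₃ : 0 ≤ x₃ t₀ + g t₀ :=
      nonneg_at (f := fun u => x₃ u + g u) ((hx₃ t₀ ht₀Icc).continuousAt.add hgcont.continuousAt) ht₀pos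
        (fun u hu => (hbefore u hu).2.2)
    set a : ℝ := g t₀ with hadef
    have ha : 0 < a := hgpos t₀
    have hax₁ : -a ≤ x₁ t₀ := by linarith
    have hax₂ : -a ≤ x₂ t₀ := by linarith
    have hax₃ : -a ≤ x₃ t₀ := by linarith
    have hM₁ := abs_le.mp (hM t₀ ht₀Icc).1
    have hM₃ := abs_le.mp (hM t₀ ht₀Icc).2
    have hgL : ε * (L * Real.exp (L * t₀)) = L * a := by
      simp only [hadef, hg]; ring
    rcases ht₀S.2 with hhit | hhit | hhit
    · -- x₁ hits the barrier
      have h0 : x₁ t₀ + g t₀ = 0 := le_antisymm hhit hge₁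
      have hD := left_deriv_nonpos
        ((hx₁ t₀ ht₀Icc).add (hexp ε t₀)) h0 ht₀pos
        (fun u hu => (hbefore u hu).1.le)
      rw [hgL] at hD
      have hx1v : x₁ t₀ = -a := by linarith
      rw [hx1v] at hD
      nlinarith [mul_nonneg (mul_nonneg hβ.le ha.le) (by linarith : (0:ℝ) ≤ x₃ t₀ + M)]
    · -- x₂ hits the barrier
      have h0 : x₂ t₀ + g t₀ = 0 := le_antisymm hhit hge₂
      have hD := left_deriv_nonpos
        ((hx₂ t₀ ht₀Icc).add (hexp ε t₀)) h0 ht₀pos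
        (fun u hu => (hbefore u hu).2.1.le)
      rw [hgL] at hD
      have hx2v : x₂ t₀ = -a := by linarith
      rw [hx2v] at hD
      have hprod : -(M * a) ≤ x₁ t₀ * x₃ t₀ :=
        prod_lb ha hM0 hax₁ hax₃ hM₁.2 hM₃.2
      nlinarith [mul_le_mul_of_nonneg_left hprod hβ.le]
    · -- x₃ hits the barrier
      have h0 : x₃ t₀ + g t₀ = 0 := le_antisymm hhit hge₃
      have hD := left_deriv_nonpos
        ((hx₃ t₀ ht₀Icc).add (hexp ε t₀)) h0 ht₀pos
        (fun u hu => (hbefore u hu).2.2.le)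
      rw [hgL] at hD
      have hx3v : x₃ t₀ = -a := by linarith
      rw [hx3v] at hD
      nlinarith [mul_nonneg hk.le ha.le, mul_nonneg (mul_nonneg hβ.le hM0) ha.le]
  -- conclude by letting ε → 0
  have final : ∀ y : ℝ → ℝ,
      (∀ ε : ℝ, 0 < ε → 0 < y t + ε * Real.exp (L * t)) → 0 ≤ y t := by
    intro y hy
    by_contra h
    push_neg at h
    have hε : 0 < -y t / Real.exp (L * t) := div_pos (by linarith) (Real.exp_pos _)
    have := hy _ hε
    rw [div_mul_cancel₀ _ (Real.exp_ne_zero _)] at this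
    linarith
  exact ⟨final x₁ fun ε hε => ((key ε hε t ht).1),
    final x₂ fun ε hε => ((key ε hε t ht).2.1),
    final x₃ fun ε hε => ((key ε hε t ht).2.2)⟩
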